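/- Let T ∈ G(n,d) be (the orthogonal projection matrix onto) a d-plane in ℝ^n and let L ∈ ℝ^n⊗ℝ^n. For small t, let T(t) ∈ G(n,d) denote the orthogonal projection onto the d-plane (Id + tL)(T). Then t ↦ T(t) is differentiable at 0 with T'(0) = T^⊥∘L∘T + (T^⊥∘L∘T)^*, and T'(0) belongs to the tangent space of G(n,d) at T. -/

import Mathlib

open MeasureTheory Filter Metric Set Topology ENNReal ProbabilityTheory
open scoped Matrix
open scoped RealInnerProductSpace

noncomputable section

attribute [local instance] Matrix.normedAddCommGroup Matrix.normedSpace

/-- Euclidean space `ℝⁿ`. -/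
abbrev E (n : ℕ) := EuclideanSpace ℝ (Fin n)

/-- Square `n × n` real matrices, `ℝⁿ ⊗ ℝⁿ`. -/
abbrev Mat (n : ℕ) := Matrix (Fin n) (Fin n) ℝ

instance matMeasurableSpace {n : ℕ} : MeasurableSpace (Mat n) :=
  inferInstanceAs (MeasurableSpace (Fin n → Fin n → ℝ))

instance matBorelSpace {n : ℕ} : BorelSpace (Mat n) :=
  inferInstanceAs (BorelSpace (Fin n → Fin n → ℝ))

/-- The Grassmannian `G(n,d)`, identified with the set of orthogonal projection
matrices of rank `d`: symmetric idempotent `n × n` matrices of trace `d`. -/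
def grassSet (n d : ℕ) : Set (Mat n) :=
  {T | T * T = T ∧ Tᵀ = T ∧ T.trace = (d : ℝ)}

/-- Inner (Hilbert-Schmidt) product of matrices, `A : B = tr (Aᵀ B)`. -/
def mdot {n : ℕ} (A B : Mat n) : ℝ := (Aᵀ * B).trace

/-- Action of a matrix on a vector of `ℝⁿ`. -/
def matVec {n : ℕ} (A : Mat n) (v : E n) : E n := Matrix.toEuclideanLin A v

/-- The `d`-plane (set of fixed points) associated to a projection matrix `T`. -/
def planeSet {n : ℕ} (T : Mat n) : Set (E n) := {y | matVec T y = y}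

/-- The matrix `B_F(x,T)` associated to an integrand `F`, defined by
`B_F(x,T) : L = F(x,T) (T : L) + ⟨d_T F(x,T), T^⊥ L T + (T^⊥ L T)ᵀ⟩`. -/
def BF {n : ℕ} (F : E n → Mat n → ℝ) (x : E n) (T : Mat n) : Mat n :=
  Matrix.of fun i j =>
    F x T * T i j +
      fderiv ℝ (F x) T
        ((1 - T) * Matrix.single i j (1 : ℝ) * T +
          ((1 - T) * Matrix.single i j (1 : ℝ) * T)ᵀ)

/-- The matrix `Dg(x)` of the differential of a vector field `g`. -/
def gradMat {n : ℕ} (g : E n → E n) (x : E n) : Mat n :=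
  Matrix.of fun i j => fderiv ℝ g x (EuclideanSpace.single j (1 : ℝ)) i

/-- The anisotropic first variation
`δ_F V (g) = ∫ [⟨d_x F(x,T), g x⟩ + B_F(x,T) : Dg(x)] dV(x,T)`. -/
def firstVar {n : ℕ} (F : E n → Mat n → ℝ) (V : Measure (E n × Mat n))
    (g : E n → E n) : ℝ :=
  ∫ p, (fderiv ℝ (fun y => F y p.2) p.1 (g p.1) +
    mdot (BF F p.1 p.2) (gradMat g p.1)) ∂V

/-- `F` is a `C¹` integrand on `Ω × G(n,d)` (via an ambient extension in the
Grassmannian variable). -/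
def IsC1 {n : ℕ} (F : E n → Mat n → ℝ) (Ω : Set (E n)) : Prop :=
  ContDiffOn ℝ 1 (fun p : E n × Mat n => F p.1 p.2) (Ω ×ˢ univ)

/-- Test vector fields: `g ∈ C¹_c(Ω, ℝⁿ)`. -/
def TestVF {n : ℕ} (Ω : Set (E n)) (g : E n → E n) : Prop :=
  ContDiff ℝ 1 g ∧ HasCompactSupport g ∧ tsupport g ⊆ Ω

/-- Sup norm of a vector field. -/
def supNorm {n : ℕ} (g : E n → E n) : ℝ := ⨆ x, ‖g x‖

/-- `δ_F V` is a Radon measure on the open set `Ω`, i.e. `V` has locally bounded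
anisotropic first variation: for every compact `K ⊆ Ω` there is `C` with
`|δ_F V (g)| ≤ C ‖g‖_∞` whenever `spt g ⊆ K`. -/
def HasBoundedFV {n : ℕ} (F : E n → Mat n → ℝ) (V : Measure (E n × Mat n))
    (Ω : Set (E n)) : Prop :=
  ∀ K : Set (E n), IsCompact K → K ⊆ Ω →
    ∃ C : ℝ, ∀ g : E n → E n, TestVF Ω g → tsupport g ⊆ K →
      |firstVar F V g| ≤ C * supNorm g

/-- `A_x(μ) = ∫ B_F(x,T) dμ(T)`. -/
def Ax {n : ℕ} (F : E n → Mat n → ℝ) (x : E n) (μ : Measure (Mat n)) : Mat n :=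
  ∫ T, BF F x T ∂μ

/-- Dimension of the kernel of (the linear map associated to) a matrix. -/
def kerDim {n : ℕ} (A : Mat n) : ℕ :=
  Module.finrank ℝ (LinearMap.ker (Matrix.toEuclideanLin A))

/-- The atomic condition (AC) for `F` at the point `x`:
(i) `dim Ker A_x(μ) ≤ n − d` for every probability measure `μ` on `G(n,d)`;
(ii) if `dim Ker A_x(μ) = n − d` then `μ` is a Dirac delta. -/
def AtomicCondition (n d : ℕ) (F : E n → Mat n → ℝ) (x : E n) : Prop :=
  ∀ μ : Measure (Mat n), IsProbabilityMeasure μ → μ (grassSet n d) = 1 →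
    kerDim (Ax F x μ) ≤ n - d ∧
      (kerDim (Ax F x μ) = n - d → ∃ T₀ ∈ grassSet n d, μ = Measure.dirac T₀)

/-- `ω_d`, the volume of the unit ball of `ℝ^d`. -/
def omegaBall (d : ℕ) : ℝ := (volume (ball (0 : E d) 1)).toReal

/-- The `d`-dimensional Hausdorff measure `ℋ^d` on `ℝⁿ`, with the standard
normalization (so that it agrees with Lebesgue measure on `d`-planes). -/
def hausdorff (n d : ℕ) : Measure (E n) :=
  ENNReal.ofReal (omegaBall d / 2 ^ d) • μH[(d : ℝ)]

/-- Lower `d`-dimensional density `Θ^d_*(x,μ)`. -/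
def lowerDensity {n : ℕ} (d : ℕ) (μ : Measure (E n)) (x : E n) : ℝ≥0∞ :=
  liminf (fun r : ℝ => μ (ball x r) / ENNReal.ofReal (omegaBall d * r ^ d)) (𝓝[>] 0)

/-- Upper `d`-dimensional density `Θ^{d*}(x,μ)`. -/
def upperDensity {n : ℕ} (d : ℕ) (μ : Measure (E n)) (x : E n) : ℝ≥0∞ :=
  limsup (fun r : ℝ => μ (ball x r) / ENNReal.ofReal (omegaBall d * r ^ d)) (𝓝[>] 0)

/-- The set of points of positive lower `d`-dimensional density. -/
def posDens {n : ℕ} (d : ℕ) (μ : Measure (E n)) : Set (E n) :=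
  {x | 0 < lowerDensity d μ x}

/-- The rescaled measure `μ_{x,r} = (η^{x,r}_# μ) ⌊ B₁ / μ(B_r(x))`. -/
def scaledMeasure {n : ℕ} (μ : Measure (E n)) (x : E n) (r : ℝ) : Measure (E n) :=
  (μ (ball x r))⁻¹ • ((μ.map fun y => r⁻¹ • (y - x)).restrict (ball 0 1))

/-- Weak-* convergence of a sequence of measures (tested on `C_c`). -/
def WeakStar {α : Type*} [TopologicalSpace α] [MeasurableSpace α]
    (μs : ℕ → Measure α) (σ : Measure α) : Prop :=
  ∀ f : α → ℝ, Continuous f → HasCompactSupport f →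
    Tendsto (fun j => ∫ y, f y ∂(μs j)) atTop (𝓝 (∫ y, f y ∂σ))

/-- `σ ∈ Tan(x,μ)`: tangent measures in the sense of Preiss. -/
def TangentMeasure {n : ℕ} (μ : Measure (E n)) (x : E n) (σ : Measure (E n)) : Prop :=
  ∃ r : ℕ → ℝ, (∀ j, 0 < r j) ∧ Tendsto r atTop (𝓝 0) ∧
    WeakStar (fun j => scaledMeasure μ x (r j)) σ

/-- The rescaled varifold `V_{x,r}`. -/
def scaledVarifold {n : ℕ} (V : Measure (E n × Mat n)) (x : E n) (r : ℝ) :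
    Measure (E n × Mat n) :=
  (V (ball x r ×ˢ (univ : Set (Mat n))))⁻¹ •
    ((V.map fun p => (r⁻¹ • (p.1 - x), p.2)).restrict (ball 0 1 ×ˢ univ))

/-- `W ∈ Tan(x,V)`: tangent varifolds. -/
def TangentVarifold {n : ℕ} (V : Measure (E n × Mat n)) (x : E n)
    (W : Measure (E n × Mat n)) : Prop :=
  ∃ r : ℕ → ℝ, (∀ j, 0 < r j) ∧ Tendsto r atTop (𝓝 0) ∧
    WeakStar (fun j => scaledVarifold V x (r j)) W

/-- A set `K ⊆ ℝⁿ` is `d`-rectifiable: up to an `ℋ^d`-null set it is covered by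
countably many `C¹` images of `ℝ^d`. -/
def IsRectifiableSet (n d : ℕ) (K : Set (E n)) : Prop :=
  ∃ f : ℕ → (E d → E n), (∀ j, ContDiff ℝ 1 (f j)) ∧
    hausdorff n d (K \ ⋃ j, range (f j)) = 0

/-- `T` is the approximate tangent plane of the `d`-rectifiable set `K` at `x`:
the blow-ups of `ℋ^d ⌊ K` at `x` converge weakly-* to `ℋ^d ⌊ T`. -/
def IsApproxTangentAt (n d : ℕ) (K : Set (E n)) (x : E n) (T : Mat n) : Prop :=
  ∀ f : E n → ℝ, Continuous f → HasCompactSupport f →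
    Tendsto (fun r : ℝ => (∫ y, f (r⁻¹ • (y - x)) ∂((hausdorff n d).restrict K)) / r ^ d)
      (𝓝[>] 0) (𝓝 (∫ y in planeSet T, f y ∂(hausdorff n d)))

/-- A `d`-varifold is `d`-rectifiable if it is of the form
`θ ℋ^d ⌊ K ⊗ δ_{T_x K}` for a `d`-rectifiable set `K` and a positive Borel
function `θ`. -/
def IsRectifiableVarifold (n d : ℕ) (V : Measure (E n × Mat n)) : Prop :=
  ∃ (K : Set (E n)) (θ : E n → ℝ≥0∞) (τ : E n → Mat n),
    IsRectifiableSet n d K ∧ Measurable θ ∧ Measurable τ ∧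
    (∀ x ∈ K, 0 < θ x ∧ θ x ≠ ⊤) ∧ (∀ x, τ x ∈ grassSet n d) ∧
    (∀ᵐ x ∂((hausdorff n d).restrict K), IsApproxTangentAt n d K x (τ x)) ∧
    V = Measure.map (fun x => (x, τ x)) (((hausdorff n d).restrict K).withDensity θ)


/-- The orthogonal projection matrix onto a subspace `W ⊆ ℝⁿ`. -/
def projMat {n : ℕ} (W : Submodule ℝ (E n)) : Mat n :=
  Matrix.toEuclideanLin.symm ((W.subtypeL.comp (W.orthogonalProjectionOnto)).toLinearMap)

section Helpers
variable {n : ℕ}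

lemma hasDerivAt_matrix {f : ℝ → Mat n} {f' : Mat n} {x : ℝ} :
    HasDerivAt f f' x ↔ ∀ i j, HasDerivAt (fun t => f t i j) (f' i j) x := by
  exact hasDerivAt_pi.trans (forall_congr' fun i => hasDerivAt_pi)

lemma HasDerivAt.matrix_mul {f g : ℝ → Mat n} {f' g' : Mat n} {x : ℝ}
    (hf : HasDerivAt f f' x) (hg : HasDerivAt g g' x) :
    HasDerivAt (fun t => f t * g t) (f' * g x + f x * g') x := by
  rw [hasDerivAt_matrix] at *
  intro i j
  simp only [Matrix.mul_apply, Matrix.add_apply]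
  refine HasDerivAt.congr_deriv (HasDerivAt.fun_sum fun k _ => ((hf i k).mul (hg k j))) ?_
  rw [Finset.sum_add_distrib]

lemma HasDerivAt.matrix_smul {c : ℝ → ℝ} {f : ℝ → Mat n} {c' : ℝ} {f' : Mat n} {x : ℝ}
    (hc : HasDerivAt c c' x) (hf : HasDerivAt f f' x) :
    HasDerivAt (fun t => c t • f t) (c' • f x + c x • f') x := by
  rw [hasDerivAt_matrix] at *
  intro i j
  simp only [Matrix.smul_apply, Matrix.add_apply, smul_eq_mul]
  exact (hc.mul (hf i j))

lemma HasDerivAt.matrix_transpose {f : ℝ → Mat n} {f' : Mat n} {x : ℝ}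
    (hf : HasDerivAt f f' x) :
    HasDerivAt (fun t => (f t)ᵀ) f'ᵀ x := by
  rw [hasDerivAt_matrix] at *
  intro i j
  simpa [Matrix.transpose_apply] using hf j i

lemma differentiableAt_matrix_det {f : ℝ → Mat n} {x : ℝ}
    (hf : ∀ i j, DifferentiableAt ℝ (fun t => f t i j) x) :
    DifferentiableAt ℝ (fun t => (f t).det) x := by
  have h : ∀ t, (f t).det = ∑ σ : Equiv.Perm (Fin n),
      (Equiv.Perm.sign σ : ℝ) * ∏ i, f t (σ i) i := by
    intro t; rw [Matrix.det_apply]; simp [Units.smul_def]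
  simp only [h]
  refine DifferentiableAt.fun_sum fun σ _ => DifferentiableAt.const_mul ?_ _
  exact DifferentiableAt.fun_finsetProd fun i _ => hf (σ i) i

lemma differentiableAt_matrix_adjugate {f : ℝ → Mat n} {x : ℝ}
    (hf : ∀ i j, DifferentiableAt ℝ (fun t => f t i j) x) (i j : Fin n) :
    DifferentiableAt ℝ (fun t => (f t).adjugate i j) x := by
  simp only [Matrix.adjugate_apply]
  refine differentiableAt_matrix_det fun a b => ?_
  simp only [Matrix.updateRow_apply]
  by_cases h : a = j
  · simp [h]
  · simpa [h] using hf a b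

lemma transpose_sandwich (X Y : Mat n) : (X * Y * Xᵀ)ᵀ = X * Yᵀ * Xᵀ := by
  rw [Matrix.transpose_mul, Matrix.transpose_mul, Matrix.transpose_transpose,
    Matrix.mul_assoc]

lemma toEuclideanLin_mul (A B : Mat n) :
    (Matrix.toEuclideanLin (A * B) : E n →ₗ[ℝ] E n) =
      (Matrix.toEuclideanLin A : E n →ₗ[ℝ] E n) ∘ₗ (Matrix.toEuclideanLin B) := by
  ext v
  simp [Matrix.toEuclideanLin_apply, Matrix.mulVec_mulVec]

lemma real_conjTranspose (A : Mat n) : Aᴴ = Aᵀ := by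
  ext i j; simp [Matrix.conjTranspose_apply]

lemma projMat_range (P : Mat n) (h1 : P * P = P) (h2 : Pᵀ = P) :
    projMat (LinearMap.range (Matrix.toEuclideanLin P : E n →ₗ[ℝ] E n)) = P := by
  set W := LinearMap.range (Matrix.toEuclideanLin P : E n →ₗ[ℝ] E n)
  have hadj : LinearMap.adjoint (Matrix.toEuclideanLin P : E n →ₗ[ℝ] E n) =
      Matrix.toEuclideanLin P := by
    rw [← Matrix.toEuclideanLin_conjTranspose_eq_adjoint, real_conjTranspose, h2]
  apply_fun (Matrix.toEuclideanLin (𝕜 := ℝ) (m := Fin n) (n := Fin n))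
  · rw [projMat, LinearEquiv.apply_symm_apply]
    refine LinearMap.ext fun v => ?_
    have hmem : Matrix.toEuclideanLin P v ∈ W := LinearMap.mem_range_self _ v
    have horth : v - Matrix.toEuclideanLin P v ∈ Wᗮ := by
      rw [Submodule.mem_orthogonal]
      rintro u ⟨w, rfl⟩
      have key : ⟪Matrix.toEuclideanLin P w, v - Matrix.toEuclideanLin P v⟫ =
          ⟪w, Matrix.toEuclideanLin P (v - Matrix.toEuclideanLin P v)⟫ := by
        nth_rewrite 1 [← hadj]
        rw [LinearMap.adjoint_inner_left]
      have hPP : Matrix.toEuclideanLin P (Matrix.toEuclideanLin P v) =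
          Matrix.toEuclideanLin P v := by
        rw [← LinearMap.comp_apply, ← toEuclideanLin_mul, h1]
      rw [key, map_sub, hPP, sub_self, inner_zero_right]
    simpa using Submodule.eq_starProjection_of_mem_orthogonal hmem horth
  · exact LinearEquiv.injective _

end Helpers

/-- **Lemma A.1.** For `T ∈ G(n,d)` and `L ∈ ℝⁿ⊗ℝⁿ`, letting `T(t)` be the orthogonal
projection onto the `d`-plane `(Id + tL)(T)`, the map `t ↦ T(t)` is differentiable at
`0` with `T'(0) = T^⊥ L T + (T^⊥ L T)ᵀ`, which belongs to `Tan_T G(n,d)`. -/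
theorem statement12 (n d : ℕ) (T : Mat n) (hT : T ∈ grassSet n d) (L : Mat n) :
    HasDerivAt
      (fun t : ℝ => projMat (Submodule.map
        ((Matrix.toEuclideanLin (1 + t • L)) : E n →ₗ[ℝ] E n)
        (LinearMap.range ((Matrix.toEuclideanLin T) : E n →ₗ[ℝ] E n))))
      ((1 - T) * L * T + ((1 - T) * L * T)ᵀ) 0 ∧
    ((1 - T) * L * T + ((1 - T) * L * T)ᵀ)ᵀ = (1 - T) * L * T + ((1 - T) * L * T)ᵀ ∧
    T * ((1 - T) * L * T + ((1 - T) * L * T)ᵀ) * T = 0 ∧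
    (1 - T) * ((1 - T) * L * T + ((1 - T) * L * T)ᵀ) * (1 - T) = 0 := by
  obtain ⟨hTT, hTt, -⟩ := hT
  refine ⟨?_, ?_, ?_, ?_⟩
  · -- the derivative
    set A : ℝ → Mat n := fun t => (1 + t • L) * T with hAdef
    set S : ℝ → Mat n := fun t => (A t)ᵀ * A t + (1 - T) with hSdef
    set F : ℝ → Mat n := fun t => ((S t).det)⁻¹ • (A t * (S t).adjugate * (A t)ᵀ) with hFdef
    have hA0 : A 0 = T := by simp [hAdef]
    have hS0 : S 0 = 1 := by
      rw [hSdef]; simp only [hA0, hTt, hTT]; abel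
    -- derivative of A
    have hA : HasDerivAt A (L * T) 0 := by
      have : A = fun t => T + t • (L * T) := by
        funext t; rw [hAdef]; simp [add_mul, Matrix.smul_mul]
      rw [this]
      exact (((hasDerivAt_id (0:ℝ)).smul_const (L * T)).const_add T).congr_deriv (one_smul ℝ _)
    have hAT : HasDerivAt (fun t => (A t)ᵀ) ((L * T)ᵀ) 0 := hA.matrix_transpose
    -- derivative of S
    have hS : HasDerivAt S ((L * T)ᵀ * T + Tᵀ * (L * T)) 0 := by
      have := (hAT.matrix_mul hA).add_const (1 - T)
      rw [hA0] at this
      exact this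
    -- differentiability of det
    have hSentry : ∀ i j, DifferentiableAt ℝ (fun t => S t i j) 0 := fun i j =>
      (hasDerivAt_matrix.1 hS i j).differentiableAt
    have hdetDiff : DifferentiableAt ℝ (fun t => (S t).det) 0 :=
      differentiableAt_matrix_det hSentry
    set a : ℝ := deriv (fun t => (S t).det) 0 with ha
    have hdet' : HasDerivAt (fun t => (S t).det) a 0 := hdetDiff.hasDerivAt
    have hdet0 : (S 0).det = 1 := by rw [hS0, Matrix.det_one]
    have hu : HasDerivAt (fun t => ((S t).det)⁻¹) (-a) 0 := by
      have := hdet'.fun_inv (by rw [hdet0]; exact one_ne_zero)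
      simpa [hdet0] using this
    -- derivative of adjugate
    set B : Mat n := Matrix.of fun i j => deriv (fun t => (S t).adjugate i j) 0 with hB
    have hadj : HasDerivAt (fun t => (S t).adjugate) B 0 := by
      rw [hasDerivAt_matrix]
      intro i j
      exact (differentiableAt_matrix_adjugate hSentry i j).hasDerivAt
    have hBval : B = a • 1 - ((L * T)ᵀ * T + Tᵀ * (L * T)) := by
      have h1 : HasDerivAt (fun t => (S t).adjugate * S t)
          (B * S 0 + (S 0).adjugate * ((L * T)ᵀ * T + Tᵀ * (L * T))) 0 :=
        hadj.matrix_mul hS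
      have h2 : HasDerivAt (fun t => (S t).adjugate * S t) (a • (1:Mat n) + (S 0).det • 0) 0 := by
        have h3 : HasDerivAt (fun t => (S t).det • (1:Mat n)) (a • (1:Mat n) + (S 0).det • 0) 0 :=
          hdet'.matrix_smul (hasDerivAt_const 0 (1:Mat n))
        have : (fun t => (S t).adjugate * S t) = fun t => (S t).det • (1:Mat n) := by
          funext t; rw [Matrix.adjugate_mul]
        rw [this]; exact h3
      have h4 := h1.unique h2
      rw [hS0] at h4
      simp only [Matrix.adjugate_one, Matrix.det_one, mul_one, one_mul, smul_zero,
        add_zero] at h4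
      rw [eq_sub_iff_add_eq]
      exact h4
    -- derivative of F
    have hV : HasDerivAt (fun t => A t * (S t).adjugate * (A t)ᵀ)
        (((L * T) * (S 0).adjugate + A 0 * B) * (A 0)ᵀ +
          (A 0 * (S 0).adjugate) * (L * T)ᵀ) 0 :=
      (hA.matrix_mul hadj).matrix_mul hAT
    have hF : HasDerivAt F
        ((-a) • (A 0 * (S 0).adjugate * (A 0)ᵀ) +
          ((S 0).det)⁻¹ • ((((L * T) * (S 0).adjugate + A 0 * B) * (A 0)ᵀ +
            (A 0 * (S 0).adjugate) * (L * T)ᵀ))) 0 := hu.matrix_smul hV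
    -- simplify the derivative value
    have hval : ((-a) • (A 0 * (S 0).adjugate * (A 0)ᵀ) +
          ((S 0).det)⁻¹ • ((((L * T) * (S 0).adjugate + A 0 * B) * (A 0)ᵀ +
            (A 0 * (S 0).adjugate) * (L * T)ᵀ)))
        = (1 - T) * L * T + ((1 - T) * L * T)ᵀ := by
      rw [hdet0, hA0, hS0, Matrix.adjugate_one, hBval]
      rw [hTt]
      simp only [Matrix.transpose_mul, Matrix.transpose_one, hTt, Matrix.transpose_smul,
        Matrix.transpose_sub, Matrix.transpose_add, mul_one, one_mul, inv_one, one_smul]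
      have hTT' : ∀ X : Mat n, T * (T * X) = T * X := fun X => by
        rw [← Matrix.mul_assoc, hTT]
      have hTT'' : ∀ X : Mat n, X * T * T = X * T := fun X => by
        rw [Matrix.mul_assoc, hTT]
      simp only [Matrix.mul_sub, Matrix.sub_mul, Matrix.mul_add, Matrix.add_mul,
        Matrix.mul_smul, Matrix.smul_mul, mul_one, one_mul, Matrix.mul_assoc, hTT, hTT', hTT'']
      module
    rw [hval] at hF
    -- eventual equality
    refine hF.congr_of_eventuallyEq ?_
    have hcont : ContinuousAt (fun t => (S t).det) 0 := hdetDiff.continuousAt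
    have hev : ∀ᶠ t in 𝓝 (0:ℝ), (S t).det ≠ 0 :=
      hcont.eventually_ne (by rw [hdet0]; exact one_ne_zero)
    filter_upwards [hev] with t ht
    have hunit : IsUnit (S t).det := isUnit_iff_ne_zero.2 ht
    have hT1 : T * (1 - T) = 0 := by rw [Matrix.mul_sub, mul_one, hTT, sub_self]
    have h1T : (1 - T) * T = 0 := by rw [Matrix.sub_mul, one_mul, hTT, sub_self]
    have hA1 : A t * (1 - T) = 0 := by
      show (1 + t • L) * T * (1 - T) = 0
      rw [Matrix.mul_assoc, hT1, mul_zero]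
    have hAt : (A t)ᵀ = T * (1 + t • L)ᵀ := by
      show ((1 + t • L) * T)ᵀ = _
      rw [Matrix.transpose_mul, hTt]
    have h1A : (1 - T) * (A t)ᵀ = 0 := by rw [hAt, ← Matrix.mul_assoc, h1T, zero_mul]
    have hSsym : (S t)ᵀ = S t := by
      show ((A t)ᵀ * A t + (1 - T))ᵀ = (A t)ᵀ * A t + (1 - T)
      rw [Matrix.transpose_add, Matrix.transpose_mul, Matrix.transpose_transpose,
        Matrix.transpose_sub, Matrix.transpose_one, hTt]
    have h1T1 : (1 - T) * (1 - T) = 1 - T := by rw [Matrix.sub_mul, one_mul, hT1, sub_zero]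
    have hSl : (1 - T) * S t = 1 - T := by
      show (1 - T) * ((A t)ᵀ * A t + (1 - T)) = 1 - T
      rw [Matrix.mul_add, ← Matrix.mul_assoc, h1A, zero_mul, zero_add, h1T1]
    have hSr : S t * (1 - T) = 1 - T := by
      show ((A t)ᵀ * A t + (1 - T)) * (1 - T) = 1 - T
      rw [Matrix.add_mul, Matrix.mul_assoc, hA1, mul_zero, zero_add, h1T1]
    have hinv_l : (S t)⁻¹ * S t = 1 := Matrix.nonsing_inv_mul _ hunit
    have hinv_r : S t * (S t)⁻¹ = 1 := Matrix.mul_nonsing_inv _ hunit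
    have hinv1T : (S t)⁻¹ * (1 - T) = 1 - T := by
      calc (S t)⁻¹ * (1 - T) = (S t)⁻¹ * (S t * (1 - T)) := by rw [hSr]
        _ = ((S t)⁻¹ * S t) * (1 - T) := by rw [Matrix.mul_assoc]
        _ = 1 - T := by rw [hinv_l, one_mul]
    have hinvsym : ((S t)⁻¹)ᵀ = (S t)⁻¹ := by
      rw [Matrix.transpose_nonsing_inv, hSsym]
    set P : Mat n := A t * (S t)⁻¹ * (A t)ᵀ with hPdef
    have hG : (A t)ᵀ * A t = S t - (1 - T) := by
      show _ = (A t)ᵀ * A t + (1 - T) - (1 - T)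
      abel
    have hPsym : Pᵀ = P := by
      rw [hPdef, transpose_sandwich, hinvsym]
    have hPA : P * A t = A t := by
      have e : P * A t = A t * (S t)⁻¹ * ((A t)ᵀ * A t) := by rw [hPdef]; noncomm_ring
      rw [e, hG, Matrix.mul_sub, Matrix.mul_assoc, hinv_l, mul_one, Matrix.mul_assoc,
        hinv1T, hA1, sub_zero]
    have hPP : P * P = P := by
      have e : P * P = (P * A t) * ((S t)⁻¹ * (A t)ᵀ) := by rw [hPdef]; noncomm_ring
      rw [e, hPA, ← Matrix.mul_assoc, hPdef]
    have hr1 : LinearMap.range (Matrix.toEuclideanLin P : E n →ₗ[ℝ] E n) =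
        LinearMap.range (Matrix.toEuclideanLin (A t) : E n →ₗ[ℝ] E n) := by
      refine le_antisymm ?_ ?_
      · have : P = A t * ((S t)⁻¹ * (A t)ᵀ) := by rw [hPdef, Matrix.mul_assoc]
        rw [this, toEuclideanLin_mul]
        exact LinearMap.range_comp_le_range _ _
      · have : A t = P * A t := hPA.symm
        conv_lhs => rw [this]
        rw [toEuclideanLin_mul]
        exact LinearMap.range_comp_le_range _ _
    have hplane : Submodule.map ((Matrix.toEuclideanLin (1 + t • L)) : E n →ₗ[ℝ] E n)
        (LinearMap.range ((Matrix.toEuclideanLin T) : E n →ₗ[ℝ] E n)) =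
        LinearMap.range (Matrix.toEuclideanLin (A t) : E n →ₗ[ℝ] E n) := by
      rw [← LinearMap.range_comp, ← toEuclideanLin_mul]
    have hPF : P = F t := by
      rw [hPdef]
      show A t * (S t)⁻¹ * (A t)ᵀ = ((S t).det)⁻¹ • (A t * (S t).adjugate * (A t)ᵀ)
      rw [Matrix.inv_def, Ring.inverse_eq_inv', Matrix.mul_smul, Matrix.smul_mul]
    calc projMat (Submodule.map ((Matrix.toEuclideanLin (1 + t • L)) : E n →ₗ[ℝ] E n)
          (LinearMap.range ((Matrix.toEuclideanLin T) : E n →ₗ[ℝ] E n)))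
        = projMat (LinearMap.range (Matrix.toEuclideanLin (A t) : E n →ₗ[ℝ] E n)) := by
          rw [hplane]
      _ = projMat (LinearMap.range (Matrix.toEuclideanLin P : E n →ₗ[ℝ] E n)) := by rw [hr1]
      _ = P := projMat_range P hPP hPsym
      _ = F t := hPF
  · simp only [Matrix.transpose_add, Matrix.transpose_transpose, add_comm]
  · have hTT' : ∀ X : Mat n, T * (T * X) = T * X := fun X => by
      rw [← Matrix.mul_assoc, hTT]
    have hTT'' : ∀ X : Mat n, X * T * T = X * T := fun X => by
      rw [Matrix.mul_assoc, hTT]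
    simp only [Matrix.transpose_mul, Matrix.transpose_sub, Matrix.transpose_one, hTt,
      Matrix.mul_add, Matrix.add_mul, Matrix.mul_sub, Matrix.sub_mul, mul_one, one_mul,
      Matrix.mul_assoc, hTT, hTT', hTT'']
    abel
  · have hTT' : ∀ X : Mat n, T * (T * X) = T * X := fun X => by
      rw [← Matrix.mul_assoc, hTT]
    have hTT'' : ∀ X : Mat n, X * T * T = X * T := fun X => by
      rw [Matrix.mul_assoc, hTT]
    simp only [Matrix.transpose_mul, Matrix.transpose_sub, Matrix.transpose_one, hTt,
      Matrix.mul_add, Matrix.add_mul, Matrix.mul_sub, Matrix.sub_mul, mul_one, one_mul,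
      Matrix.mul_assoc, hTT, hTT', hTT'']
    abel

end
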